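/- For any natural number n ≥ 1, C_{U(n)}(n) ≥ 2^{Ω(n)}; that is, there exists a sequence of length 2^{Ω(n)} − 1 in Z_n having no nonempty subsequence of consecutive terms which is a U(n)-weighted zero-sum sequence. -/

import Mathlib

/-- A list `L` over `ZMod n` is an `A`-weighted zero-sum sequence if there are weights
`a₁, …, a_k ∈ A` (one per term) with `a₁x₁ + ⋯ + a_kx_k = 0`. -/
def IsWeightedZeroSum {n : ℕ} (A : Set (ZMod n)) (L : List (ZMod n)) : Prop :=
  ∃ a : List (ZMod n), a.length = L.length ∧ (∀ w ∈ a, w ∈ A) ∧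
    (List.zipWith (· * ·) a L).sum = 0

/-- `L` has a nonempty subsequence of consecutive terms which is an
`A`-weighted zero-sum sequence. -/
def HasConsecWZS {n : ℕ} (A : Set (ZMod n)) (L : List (ZMod n)) : Prop :=
  ∃ l₁ l₂ l₃ : List (ZMod n), L = l₁ ++ l₂ ++ l₃ ∧ l₂ ≠ [] ∧ IsWeightedZeroSum A l₂

/-- The "ruler" sequence associated to a list of primes. -/
def rul : List ℕ → List ℕ
  | [] => []
  | q :: t => (rul t).map (q * ·) ++ 1 :: (rul t).map (q * ·)

lemma rul_length (qs : List ℕ) : (rul qs).length = 2 ^ qs.length - 1 := by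
  induction qs with
  | nil => simp [rul]
  | cons q t ih =>
    have h1 : 1 ≤ 2 ^ t.length := Nat.one_le_two_pow
    simp only [rul, List.length_append, List.length_cons, List.length_map, ih,
      List.length, pow_succ]
    omega

lemma dvd_zip_sum (q : ℕ) : ∀ (a s : List ℕ), (∀ x ∈ s, q ∣ x) →
    q ∣ (List.zipWith (· * ·) a s).sum
  | [], s, h => by simp
  | x :: a, [], h => by simp
  | x :: a, y :: s, h => by
    simp only [List.zipWith_cons_cons, List.sum_cons]
    exact dvd_add (Dvd.dvd.mul_left (h y (by simp)) x)
      (dvd_zip_sum q a s fun z hz => h z (by simp [hz]))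

lemma zip_map_mul (q : ℕ) : ∀ (a s : List ℕ),
    (List.zipWith (· * ·) a (s.map (q * ·))).sum = q * (List.zipWith (· * ·) a s).sum
  | [], s => by simp
  | x :: a, [] => by simp
  | x :: a, y :: s => by
    simp only [List.map_cons, List.zipWith_cons_cons, List.sum_cons, zip_map_mul q a s]
    ring

lemma cast_zip_sum (n : ℕ) : ∀ (a s : List ℕ),
    (((List.zipWith (· * ·) a s).sum : ℕ) : ZMod n) =
      (List.zipWith (fun (x y : ZMod n) => x * y) (a.map (Nat.cast : ℕ → ZMod n))
        (s.map (Nat.cast : ℕ → ZMod n))).sum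
  | [], s => by simp
  | x :: a, [] => by simp
  | x :: a, y :: s => by
    simp only [List.map_cons, List.zipWith_cons_cons, List.sum_cons, Nat.cast_add,
      Nat.cast_mul, cast_zip_sum n a s]

/-- Splitting an infix of `A ++ y :: B`. -/
lemma infix_middle {α : Type*} (A B : List α) (y : α) (l₂ : List α)
    (h : l₂ <:+: A ++ y :: B) :
    l₂ <:+: A ∨ l₂ <:+: B ∨
      ∃ s₁ s₂, l₂ = s₁ ++ y :: s₂ ∧ (∀ x ∈ s₁, x ∈ A) ∧ (∀ x ∈ s₂, x ∈ B) := by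
  obtain ⟨s, u, hsu⟩ := h
  have hl2 : ((A ++ y :: B).drop s.length).take l₂.length = l₂ := by
    rw [← hsu, List.append_assoc, List.drop_left, List.take_left]
  rcases le_or_gt s.length A.length with hle | hgt
  · have h1 : (A ++ y :: B).drop s.length = A.drop s.length ++ y :: B := by
      rw [List.drop_append, Nat.sub_eq_zero_of_le hle, List.drop_zero]
    rw [h1] at hl2
    rcases le_or_gt (s.length + l₂.length) A.length with hc | hc
    · left
      rw [List.take_append,
        Nat.sub_eq_zero_of_le (by simp only [List.length_drop]; omega),
        List.take_zero, List.append_nil] at hl2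
      exact hl2 ▸ ((List.take_prefix _ _).isInfix.trans (List.drop_suffix _ _).isInfix)
    · right; right
      rw [List.take_append,
        List.take_of_length_le (by simp only [List.length_drop]; omega),
        show l₂.length - (A.drop s.length).length =
          (l₂.length - (A.length - s.length) - 1) + 1 from by
            simp only [List.length_drop]; omega,
        List.take_succ_cons] at hl2
      exact ⟨A.drop s.length, B.take (l₂.length - (A.length - s.length) - 1), hl2.symm,
        fun x hx => List.mem_of_mem_drop hx, fun x hx => List.mem_of_mem_take hx⟩
  · right; left
    have h1 : (A ++ y :: B).drop s.length = B.drop (s.length - A.length - 1) := by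
      rw [List.drop_append, List.drop_eq_nil_of_le (le_of_lt hgt),
        List.nil_append,
        show s.length - A.length = (s.length - A.length - 1) + 1 from by omega]
      rfl
    rw [h1] at hl2
    exact hl2 ▸ ((List.take_prefix _ _).isInfix.trans (List.drop_suffix _ _).isInfix)

lemma key (n : ℕ) : ∀ (qs : List ℕ), (∀ q ∈ qs, q.Prime ∧ q ∣ n) →
    ∀ l₂ : List ℕ, l₂ <:+: rul qs → l₂ ≠ [] →
    ∀ a : List ℕ, a.length = l₂.length → (∀ w ∈ a, Nat.Coprime w n) →
    ∃ d, d ∣ qs.prod ∧ ¬ d ∣ (List.zipWith (· * ·) a l₂).sum := by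
  intro qs
  induction qs with
  | nil =>
    intro _ l₂ h hne
    exact absurd (List.infix_nil.mp (by simpa [rul] using h)) hne
  | cons q t ih =>
    intro hq l₂ hinf hne a hlen ha
    have hqp := (hq q (by simp)).1
    have hqn := (hq q (by simp)).2
    set A : List ℕ := (rul t).map (q * ·) with hA
    have hrul : rul (q :: t) = A ++ 1 :: A := rfl
    rw [hrul] at hinf
    have hinner : l₂ <:+: A →
        ∃ d, d ∣ (q :: t).prod ∧ ¬ d ∣ (List.zipWith (· * ·) a l₂).sum := by
      intro hc
      obtain ⟨s, u, hsu⟩ := hc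
      have hmap : l₂ = (((rul t).drop s.length).take l₂.length).map (q * ·) := by
        rw [List.map_take, List.map_drop, ← hA, ← hsu, List.append_assoc,
          List.drop_left, List.take_left]
      set l₂' := ((rul t).drop s.length).take l₂.length with hl₂'
      have hinf2 : l₂' <:+: rul t :=
        (List.take_prefix _ _).isInfix.trans (List.drop_suffix _ _).isInfix
      have hne' : l₂' ≠ [] := by
        intro h0; apply hne; rw [hmap, h0]; rfl
      have hlen' : a.length = l₂'.length := by
        rw [hlen, hmap, List.length_map]
      obtain ⟨d, hd, hnd⟩ := ih (fun p hp => hq p (by simp [hp])) l₂' hinf2 hne' a hlen' ha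
      refine ⟨q * d, ?_, ?_⟩
      · rw [List.prod_cons]; exact mul_dvd_mul_left q hd
      · rw [hmap, zip_map_mul]
        intro hdvd
        exact hnd ((mul_dvd_mul_iff_left hqp.pos.ne').mp hdvd)
    rcases infix_middle A A 1 l₂ hinf with hc | hc | ⟨s₁, s₂, hsplit, hs₁, hs₂⟩
    · exact hinner hc
    · exact hinner hc
    · -- spanning case
      have hlen2 : s₁.length < a.length := by
        rw [hlen, hsplit]
        simp only [List.length_append, List.length_cons]
        omega
      obtain ⟨w, a₂, hwe⟩ : ∃ w a₂, a.drop s₁.length = w :: a₂ := by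
        cases h : a.drop s₁.length with
        | nil =>
          exfalso
          have := List.length_drop (i := s₁.length) (l := a)
          rw [h] at this
          simp at this
          omega
        | cons w a₂ => exact ⟨w, a₂, rfl⟩
      have hae : a = a.take s₁.length ++ w :: a₂ := by rw [← hwe, List.take_append_drop]
      have hwmem : w ∈ a := by rw [hae]; simp
      have hAdvd : ∀ x ∈ A, q ∣ x := by
        intro x hx
        obtain ⟨y, _, hy⟩ := List.mem_map.mp hx
        exact ⟨y, hy.symm⟩
      have hZ₁ : q ∣ (List.zipWith (· * ·) (a.take s₁.length) s₁).sum :=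
        dvd_zip_sum q _ _ (fun x hx => hAdvd x (hs₁ x hx))
      have hZ₂ : q ∣ (List.zipWith (· * ·) a₂ s₂).sum :=
        dvd_zip_sum q _ _ (fun x hx => hAdvd x (hs₂ x hx))
      refine ⟨q, by rw [List.prod_cons]; exact dvd_mul_right _ _, ?_⟩
      rw [hsplit, hae,
        List.zipWith_append (by simp only [List.length_take]; omega),
        List.sum_append, List.zipWith_cons_cons, List.sum_cons]
      intro hdvd
      have h1 : q ∣ w * 1 + (List.zipWith (· * ·) a₂ s₂).sum :=
        (Nat.dvd_add_right hZ₁).mp hdvd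
      rw [mul_one, Nat.add_comm] at h1
      have hqw : q ∣ w := (Nat.dvd_add_right hZ₂).mp h1
      have : q ∣ 1 := (ha w hwmem) ▸ Nat.dvd_gcd hqw hqn
      exact Nat.Prime.one_lt hqp |>.ne' (Nat.dvd_one.mp this)

/-- For `n ≥ 1`, `C_{U(n)}(n) ≥ 2^{Ω(n)}`: there exists a sequence of
length `2^{Ω(n)} - 1` in `Z_n` with no nonempty consecutive `U(n)`-weighted zero-sum
subsequence. Here `Ω(n)` is the number of prime factors of `n` with multiplicity. -/
theorem C_units_lower_bound (n : ℕ) (hn : 1 ≤ n) :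
    ∃ L : List (ZMod n), L.length = 2 ^ n.primeFactorsList.length - 1 ∧
      ¬ HasConsecWZS {x : ZMod n | IsUnit x} L := by
  have hn0 : n ≠ 0 := by omega
  haveI : NeZero n := ⟨hn0⟩
  set qs := n.primeFactorsList with hqs
  refine ⟨(rul qs).map (Nat.cast : ℕ → ZMod n), by rw [List.length_map, rul_length], ?_⟩
  rintro ⟨l₁, l₂, l₃, hL, hne, a, hlen, ha, hsum⟩
  set bN := ((rul qs).drop l₁.length).take l₂.length with hbN
  have hb : bN.map (Nat.cast : ℕ → ZMod n) = l₂ := by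
    rw [hbN, List.map_take, List.map_drop, hL, List.append_assoc,
      List.drop_left, List.take_left]
  have hbinf : bN <:+: rul qs :=
    (List.take_prefix _ _).isInfix.trans (List.drop_suffix _ _).isInfix
  have hbne : bN ≠ [] := by
    intro h0; apply hne; rw [← hb, h0]; rfl
  set aN := a.map ZMod.val with haN
  have hmapval : ∀ l : List (ZMod n), (l.map ZMod.val).map (Nat.cast : ℕ → ZMod n) = l := by
    intro l
    induction l with
    | nil => simp
    | cons v l ihl => simp [ihl, ZMod.natCast_val, ZMod.cast_id]
  have haN_len : aN.length = bN.length := by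
    rw [haN, List.length_map, hlen, ← hb, List.length_map]
  have haN_cop : ∀ w ∈ aN, Nat.Coprime w n := by
    intro w hw
    obtain ⟨v, hv, rfl⟩ := List.mem_map.mp (haN ▸ hw)
    obtain ⟨u, rfl⟩ := ha v hv
    exact ZMod.val_coe_unit_coprime u
  obtain ⟨d, hd, hnd⟩ := key n qs
    (fun q hq => ⟨Nat.prime_of_mem_primeFactorsList hq, Nat.dvd_of_mem_primeFactorsList hq⟩)
    bN hbinf hbne aN haN_len haN_cop
  have hdn : d ∣ n := by rwa [hqs, Nat.prod_primeFactorsList hn0] at hd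
  have hcast : (((List.zipWith (· * ·) aN bN).sum : ℕ) : ZMod n) = 0 := by
    rw [cast_zip_sum, haN, hmapval, hb]
    exact hsum
  exact hnd (hdn.trans ((ZMod.natCast_eq_zero_iff _ n).mp hcast))
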